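/- Let t ≥ 2 and n ≥ 1 be integers, let ω ∈ ℂ be a primitive t-th root of unity, and let λ be a partition of length at most tn. Suppose it is NOT the case that both n_{t−1}(λ,tn) = n and n_i(λ,tn) + n_{t−2−i}(λ,tn) = 2n for all 0 ≤ i ≤ ⌊(t−2)/2⌋ (equivalently, the t-core of λ is not a symplectic t-core). Then for every choice of nonzero x_1,…,x_n ∈ ℂ, the tn × tn matrix M, whose rows are indexed by pairs (p,i) with 0 ≤ p ≤ t−1, 1 ≤ i ≤ n, whose columns are indexed by 1 ≤ j ≤ tn, and whose entries are M_{(p,i),j} = (ω^p x_i)^{β_j(λ)+1} − (ω^p x_i)^{−β_j(λ)−1}, has determinant 0. In particular the symplectic character sp_λ evaluated at the tn numbers ω^p x_i vanishes. -/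

import Mathlib

open BigOperators

/-- The beta set of a partition `lam` of length at most `m`:
`β_j(λ) = λ_j + m - j` (0-indexed: `β j = λ j + (m - 1 - j)`). -/
def betaSet (m : ℕ) (lam : Fin m → ℕ) (j : Fin m) : ℕ :=
  lam j + (m - 1 - (j : ℕ))

/-- `n_i(λ, m)`: the number of entries of the beta set congruent to `i` mod `t`. -/
def ncount (t m : ℕ) (lam : Fin m → ℕ) (i : ℕ) : ℕ :=
  (Finset.univ.filter fun j : Fin m => betaSet m lam j % t = i).card

/-- The symplectic character of `mu` evaluated at nonzero complex numbers `y`. -/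
noncomputable def spChar (N : ℕ) (mu : Fin N → ℕ) (y : Fin N → ℂ) : ℂ :=
  Matrix.det (Matrix.of fun i j : Fin N =>
      y i ^ ((betaSet N mu j : ℤ) + 1) - y i ^ (-(betaSet N mu j : ℤ) - 1)) /
    Matrix.det (Matrix.of fun i j : Fin N =>
      y i ^ (((N - 1 - (j : ℕ) : ℕ) : ℤ) + 1) - y i ^ (-((N - 1 - (j : ℕ) : ℕ) : ℤ) - 1))

section Aux

lemma pow_mod_eq' (t : ℕ) (ω : ℂ) (h1 : ω ^ t = 1) (m : ℕ) : ω ^ m = ω ^ (m % t) := by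
  conv_lhs => rw [← Nat.div_add_mod m t]
  rw [pow_add, pow_mul, h1, one_pow, one_mul]

lemma tsub_mod' (t a : ℕ) (ht : 2 ≤ t) (ha : a ≤ t / 2) :
    (t - a) % t = if a = 0 then 0 else t - a := by
  split_ifs with h
  · subst h; simp [Nat.mod_self]
  · exact Nat.mod_eq_of_lt (by omega)

lemma invol' (t a : ℕ) (ht : 2 ≤ t) (ha : a ≤ t / 2) : (t - (t - a) % t) % t = a := by
  rw [tsub_mod' t a ht ha]
  split_ifs with h
  · subst h; simp [Nat.mod_self]
  · have h2 : t - (t - a) = a := by omega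
    rw [h2, Nat.mod_eq_of_lt (by omega)]

lemma succ_mod' (t c : ℕ) (ht : 2 ≤ t) (hc : c < t) :
    (c + 1) % t = if c + 1 = t then 0 else c + 1 := by
  split_ifs with h
  · rw [h, Nat.mod_self]
  · exact Nat.mod_eq_of_lt (by omega)

lemma step_iff' (t c a : ℕ) (ht : 2 ≤ t) (hc : c < t) (ha : a ≤ t / 2) :
    ((c + 1) % t = a ∨ (c + 1) % t = (t - a) % t)
      ↔ (if a = 0 then c = t - 1 else (c = a - 1 ∨ c = t - a - 1)) := by
  rw [succ_mod' t c ht hc, tsub_mod' t a ht ha]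
  rcases Nat.eq_zero_or_pos a with h0 | h0
  · subst h0
    rw [if_pos rfl, if_pos rfl]
    by_cases h : c + 1 = t
    · rw [if_pos h]; omega
    · rw [if_neg h]; omega
  · rw [if_neg (show ¬ a = 0 by omega), if_neg (show ¬ a = 0 by omega)]
    by_cases h : c + 1 = t
    · rw [if_pos h]; omega
    · rw [if_neg h]; omega

lemma key_iff' (t b a : ℕ) (ht : 2 ≤ t) (hb : b < t) (ha : a ≤ t / 2) :
    (b = a ∨ b = (t - a) % t) ↔ (if b ≤ t / 2 then b else t - b) = a := by
  rw [tsub_mod' t a ht ha]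
  split_ifs with h1 h2 <;> omega

lemma dsum' (t n : ℕ) (ht : 2 ≤ t) :
    ∑ a ∈ Finset.range (t / 2 + 1), (if a = 0 ∨ 2 * a = t then n else 2 * n) = t * n := by
  have h : ∀ a ∈ Finset.range (t / 2 + 1),
      (if a = 0 ∨ 2 * a = t then n else 2 * n)
        + ((if a = 0 then n else 0) + (if 2 * a = t then n else 0)) = 2 * n := by
    intro a _; split_ifs <;> omega
  have h2 : ∑ a ∈ Finset.range (t / 2 + 1),
      ((if a = 0 ∨ 2 * a = t then n else 2 * n)
        + ((if a = 0 then n else 0) + (if 2 * a = t then n else 0)))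
      = (t / 2 + 1) * (2 * n) := by
    rw [Finset.sum_congr rfl h, Finset.sum_const, Finset.card_range, smul_eq_mul]
  rw [Finset.sum_add_distrib, Finset.sum_add_distrib] at h2
  have h3 : ∑ a ∈ Finset.range (t / 2 + 1), (if a = 0 then n else 0) = n := by
    rw [Finset.sum_ite_eq' (Finset.range (t / 2 + 1)) 0 (fun _ => n)]
    simp
  have h4 : ∑ a ∈ Finset.range (t / 2 + 1), (if 2 * a = t then n else 0)
      = if t % 2 = 0 then n else 0 := by
    split_ifs with hpar
    · have hcongr : ∀ a ∈ Finset.range (t / 2 + 1), (if 2 * a = t then n else 0)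
          = if a = t / 2 then n else 0 := by intro a _; split_ifs <;> omega
      rw [Finset.sum_congr rfl hcongr,
        Finset.sum_ite_eq' (Finset.range (t / 2 + 1)) (t / 2) (fun _ => n)]
      simp
    · have hcongr : ∀ a ∈ Finset.range (t / 2 + 1), (if 2 * a = t then n else 0) = 0 := by
        intro a _; split_ifs <;> omega
      rw [Finset.sum_congr rfl hcongr, Finset.sum_const, smul_eq_mul, mul_zero]
  rw [h3, h4] at h2
  set m := t / 2 with hm
  rcases Nat.mod_two_eq_zero_or_one t with he | ho
  · have ht2 : t = 2 * m := by omega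
    rw [if_pos (by omega)] at h2
    have hr : (m + 1) * (2 * n) = 2 * (m * n) + 2 * n := by ring
    have hg : t * n = 2 * (m * n) := by rw [ht2]; ring
    omega
  · have ht2 : t = 2 * m + 1 := by omega
    rw [if_neg (by omega)] at h2
    have hr : (m + 1) * (2 * n) = 2 * (m * n) + 2 * n := by ring
    have hg : t * n = 2 * (m * n) + n := by rw [ht2]; ring
    omega

/-- Elementary column vectors used to span each congruence block. -/
noncomputable def bvec (t n : ℕ) (ω : ℂ) (c : ℕ) (i : Fin n) : Fin (t * n) → ℂ :=
  fun r => if (finProdFinEquiv.symm r).2 = i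
    then (ω ^ (((finProdFinEquiv.symm r).1 : ℕ))) ^ c else 0

lemma col_decomp (t n : ℕ) (ht : 2 ≤ t) (ω : ℂ) (hω1 : ω ^ t = 1)
    (x : Fin n → ℂ) (b : ℕ) :
    (fun r : Fin (t * n) =>
      (ω ^ (((finProdFinEquiv.symm r).1 : ℕ)) * x (finProdFinEquiv.symm r).2)
          ^ ((b : ℤ) + 1)
        - (ω ^ (((finProdFinEquiv.symm r).1 : ℕ)) * x (finProdFinEquiv.symm r).2)
          ^ (-(b : ℤ) - 1))
    = (∑ i : Fin n, (x i ^ (b + 1)) • bvec t n ω ((b + 1) % t) i)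
      + ∑ i : Fin n, (-(x i ^ (b + 1))⁻¹) • bvec t n ω ((t - (b + 1) % t) % t) i := by
  have htpos : 0 < t := by omega
  funext r
  set p := ((finProdFinEquiv.symm r).1 : ℕ) with hp
  set k := (finProdFinEquiv.symm r).2 with hk
  simp only [Pi.add_apply, Finset.sum_apply, Pi.smul_apply, smul_eq_mul, bvec, ← hp, ← hk,
    mul_ite, mul_zero, Finset.sum_ite_eq, Finset.mem_univ, if_true]
  have e1 : ((b : ℤ) + 1) = ((b + 1 : ℕ) : ℤ) := by push_cast; ring
  have e2 : (-(b : ℤ) - 1) = -((b + 1 : ℕ) : ℤ) := by push_cast; ring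
  rw [e1, e2, zpow_natCast, zpow_neg, zpow_natCast, mul_pow, mul_inv]
  have hA : (ω ^ p) ^ (b + 1) = (ω ^ p) ^ ((b + 1) % t) := by
    rw [← pow_mul, ← pow_mul, pow_mod_eq' t ω hω1 (p * (b + 1)),
      pow_mod_eq' t ω hω1 (p * ((b + 1) % t))]
    congr 1
    exact Nat.ModEq.mul_left p (Nat.mod_mod_of_dvd (b + 1) dvd_rfl).symm
  have hB2 : ((ω ^ p) ^ (b + 1))⁻¹ = (ω ^ p) ^ ((t - (b + 1) % t) % t) := by
    apply inv_eq_of_mul_eq_one_right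
    rw [← pow_add, ← pow_mul, pow_mod_eq' t ω hω1]
    have hdvd : t ∣ p * (b + 1 + (t - (b + 1) % t) % t) := by
      apply Dvd.dvd.mul_left
      have hc : (b + 1) % t < t := Nat.mod_lt _ htpos
      have hq := Nat.div_add_mod (b + 1) t
      rcases Nat.eq_zero_or_pos ((b + 1) % t) with h0 | h0
      · rw [h0, Nat.sub_zero, Nat.mod_self, Nat.add_zero]
        exact ⟨(b + 1) / t, by omega⟩
      · rw [Nat.mod_eq_of_lt (by omega : t - (b + 1) % t < t)]
        exact ⟨(b + 1) / t + 1, by rw [Nat.mul_succ]; omega⟩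
    obtain ⟨q, hq⟩ := hdvd
    rw [hq, Nat.mul_mod_right, pow_zero]
  rw [hB2, hA]
  ring

open Finset Submodule Module in
lemma group_card_le (t n : ℕ) (ht : 2 ≤ t) (ω : ℂ) (hω1 : ω ^ t = 1)
    (x : Fin n → ℂ) (lam : Fin (t * n) → ℕ)
    (hli : LinearIndependent ℂ (fun j : Fin (t * n) => fun r : Fin (t * n) =>
      (ω ^ (((finProdFinEquiv.symm r).1 : ℕ)) * x (finProdFinEquiv.symm r).2)
          ^ ((betaSet (t * n) lam j : ℤ) + 1)
        - (ω ^ (((finProdFinEquiv.symm r).1 : ℕ)) * x (finProdFinEquiv.symm r).2)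
          ^ (-(betaSet (t * n) lam j : ℤ) - 1)))
    (a : ℕ) (ha : a ≤ t / 2) :
    (Finset.univ.filter fun j : Fin (t * n) =>
        (betaSet (t * n) lam j + 1) % t = a ∨
        (betaSet (t * n) lam j + 1) % t = (t - a) % t).card
      ≤ if a = 0 ∨ 2 * a = t then n else 2 * n := by
  classical
  set A := (Finset.univ.filter fun j : Fin (t * n) =>
        (betaSet (t * n) lam j + 1) % t = a ∨
        (betaSet (t * n) lam j + 1) % t = (t - a) % t) with hA
  set S : Finset (Fin (t * n) → ℂ) :=
    (({a, (t - a) % t} : Finset ℕ) ×ˢ (Finset.univ : Finset (Fin n))).image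
      (fun ci => bvec t n ω ci.1 ci.2) with hS
  set W : Submodule ℂ (Fin (t * n) → ℂ) := Submodule.span ℂ (S : Set (Fin (t * n) → ℂ)) with hW
  have hbv : ∀ c ∈ ({a, (t - a) % t} : Finset ℕ), ∀ i : Fin n, bvec t n ω c i ∈ W := by
    intro c hc i
    exact Submodule.subset_span (Finset.mem_coe.mpr
      (Finset.mem_image.mpr ⟨(c, i), Finset.mem_product.mpr ⟨hc, Finset.mem_univ i⟩, rfl⟩))
  have hmem : ∀ j ∈ A, (fun r : Fin (t * n) =>
      (ω ^ (((finProdFinEquiv.symm r).1 : ℕ)) * x (finProdFinEquiv.symm r).2)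
          ^ ((betaSet (t * n) lam j : ℤ) + 1)
        - (ω ^ (((finProdFinEquiv.symm r).1 : ℕ)) * x (finProdFinEquiv.symm r).2)
          ^ (-(betaSet (t * n) lam j : ℤ) - 1)) ∈ W := by
    intro j hj
    rw [hA, Finset.mem_filter] at hj
    set b := betaSet (t * n) lam j with hb
    rw [col_decomp t n ht ω hω1 x b]
    have hc1 : (b + 1) % t ∈ ({a, (t - a) % t} : Finset ℕ) := by
      rcases hj.2 with h | h <;> simp [h]
    have hc2 : (t - (b + 1) % t) % t ∈ ({a, (t - a) % t} : Finset ℕ) := by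
      rcases hj.2 with h | h
      · rw [h]; simp
      · rw [h, invol' t a ht ha]; simp
    exact Submodule.add_mem _
      (Submodule.sum_mem _ fun i _ => Submodule.smul_mem _ _ (hbv _ hc1 i))
      (Submodule.sum_mem _ fun i _ => Submodule.smul_mem _ _ (hbv _ hc2 i))
  have hres : LinearIndependent ℂ (fun j : {j // j ∈ A} => (fun r : Fin (t * n) =>
      (ω ^ (((finProdFinEquiv.symm r).1 : ℕ)) * x (finProdFinEquiv.symm r).2)
          ^ ((betaSet (t * n) lam (j : Fin (t * n)) : ℤ) + 1)
        - (ω ^ (((finProdFinEquiv.symm r).1 : ℕ)) * x (finProdFinEquiv.symm r).2)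
          ^ (-(betaSet (t * n) lam (j : Fin (t * n)) : ℤ) - 1))) :=
    hli.comp _ Subtype.val_injective
  let v : {j // j ∈ A} → W := fun j => ⟨_, hmem j j.2⟩
  have hv : LinearIndependent ℂ v := LinearIndependent.of_comp W.subtype hres
  have h1 : A.card ≤ finrank ℂ W := by
    rw [← Fintype.card_coe]
    exact hv.fintype_card_le_finrank
  have h2 : finrank ℂ W ≤ S.card := by
    simpa using finrank_span_le_card (R := ℂ) (S : Set (Fin (t * n) → ℂ))
  have h3 : S.card ≤ ({a, (t - a) % t} : Finset ℕ).card * n := by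
    refine le_trans (Finset.card_image_le) ?_
    rw [Finset.card_product, Finset.card_univ, Fintype.card_fin]
  have h4 : ({a, (t - a) % t} : Finset ℕ).card * n ≤ if a = 0 ∨ 2 * a = t then n else 2 * n := by
    split_ifs with h
    · have hself : (t - a) % t = a := by
        rw [tsub_mod' t a ht ha]; split_ifs with h' <;> omega
      rw [hself]
      simp
    · have hcard : ({a, (t - a) % t} : Finset ℕ).card ≤ 2 := by
        refine le_trans (Finset.card_insert_le _ _) ?_
        simp
      exact le_trans (Nat.mul_le_mul_right n hcard) (le_refl _)
  omega

end Aux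

/-- If the `t`-core of `λ` is not a symplectic `t`-core, i.e. it is not the case that
`n_{t-1}(λ,tn) = n` and `n_i + n_{t-2-i} = 2n` for all `0 ≤ i ≤ ⌊(t-2)/2⌋`, then the
`tn × tn` matrix with entries `(ω^p x_i)^{β_j(λ)+1} - (ω^p x_i)^{-β_j(λ)-1}` has
determinant `0`; in particular `sp_λ(X, ωX, …, ω^{t-1}X) = 0`. -/
theorem symplectic_twisted_vanishing
    (t n : ℕ) (ht : 2 ≤ t) (hn : 1 ≤ n)
    (ω : ℂ) (hω : IsPrimitiveRoot ω t)
    (lam : Fin (t * n) → ℕ)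
    (hanti : ∀ j k : Fin (t * n), j ≤ k → lam k ≤ lam j)
    (hcore : ¬ (ncount t (t * n) lam (t - 1) = n ∧
        ∀ i < t / 2, ncount t (t * n) lam i + ncount t (t * n) lam (t - 2 - i) = 2 * n))
    (x : Fin n → ℂ) (hx0 : ∀ i, x i ≠ 0) :
    Matrix.det (Matrix.of fun r j : Fin (t * n) =>
        (ω ^ (((finProdFinEquiv.symm r).1 : ℕ)) * x (finProdFinEquiv.symm r).2)
            ^ ((betaSet (t * n) lam j : ℤ) + 1)
          - (ω ^ (((finProdFinEquiv.symm r).1 : ℕ)) * x (finProdFinEquiv.symm r).2)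
            ^ (-(betaSet (t * n) lam j : ℤ) - 1)) = 0
    ∧ spChar (t * n) lam
        (fun r => ω ^ (((finProdFinEquiv.symm r).1 : ℕ)) * x (finProdFinEquiv.symm r).2)
      = 0 := by
  classical
  have htpos : 0 < t := by omega
  have hω1 : ω ^ t = 1 := hω.pow_eq_one
  set M : Matrix (Fin (t * n)) (Fin (t * n)) ℂ := Matrix.of fun r j : Fin (t * n) =>
        (ω ^ (((finProdFinEquiv.symm r).1 : ℕ)) * x (finProdFinEquiv.symm r).2)
            ^ ((betaSet (t * n) lam j : ℤ) + 1)
          - (ω ^ (((finProdFinEquiv.symm r).1 : ℕ)) * x (finProdFinEquiv.symm r).2)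
            ^ (-(betaSet (t * n) lam j : ℤ) - 1) with hM
  have key : Matrix.det M = 0 := by
    by_contra hdet
    have hunit : IsUnit M := (Matrix.isUnit_iff_isUnit_det M).mpr (isUnit_iff_ne_zero.mpr hdet)
    have hli0 : LinearIndependent ℂ (fun j => Matrix.transpose M j) :=
      Matrix.linearIndependent_cols_iff_isUnit.mpr hunit
    have hli : LinearIndependent ℂ (fun j : Fin (t * n) => fun r : Fin (t * n) =>
        (ω ^ (((finProdFinEquiv.symm r).1 : ℕ)) * x (finProdFinEquiv.symm r).2)
            ^ ((betaSet (t * n) lam j : ℤ) + 1)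
          - (ω ^ (((finProdFinEquiv.symm r).1 : ℕ)) * x (finProdFinEquiv.symm r).2)
            ^ (-(betaSet (t * n) lam j : ℤ) - 1)) := hli0
    -- fiberwise count
    have hble : ∀ a ∈ Finset.range (t / 2 + 1),
        (Finset.univ.filter fun j : Fin (t * n) =>
          (betaSet (t * n) lam j + 1) % t = a ∨
          (betaSet (t * n) lam j + 1) % t = (t - a) % t).card
        ≤ if a = 0 ∨ 2 * a = t then n else 2 * n := by
      intro a ha
      exact group_card_le t n ht ω hω1 x lam hli a (by
        have := Finset.mem_range.mp ha; omega)
    have hsum1 : ∑ a ∈ Finset.range (t / 2 + 1),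
        (Finset.univ.filter fun j : Fin (t * n) =>
          (betaSet (t * n) lam j + 1) % t = a ∨
          (betaSet (t * n) lam j + 1) % t = (t - a) % t).card = t * n := by
      have hfib := Finset.card_eq_sum_card_fiberwise
        (f := fun j : Fin (t * n) =>
          (fun b => if b ≤ t / 2 then b else t - b) ((betaSet (t * n) lam j + 1) % t))
        (s := Finset.univ) (t := Finset.range (t / 2 + 1))
        (fun j _ => by
          have hb : (betaSet (t * n) lam j + 1) % t < t := Nat.mod_lt _ htpos
          simp only [Finset.mem_coe, Finset.coe_range, Set.mem_Iio, Finset.mem_range]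
          split_ifs <;> omega)
      rw [Finset.card_univ, Fintype.card_fin] at hfib
      refine Eq.trans ?_ hfib.symm
      refine Finset.sum_congr rfl fun a ha => ?_
      congr 1
      refine Finset.filter_congr fun j _ => ?_
      have hb : (betaSet (t * n) lam j + 1) % t < t := Nat.mod_lt _ htpos
      have haa : a ≤ t / 2 := by have := Finset.mem_range.mp ha; omega
      exact key_iff' t _ a ht hb haa
    have heq := (Finset.sum_eq_sum_iff_of_le hble).mp
      (hsum1.trans (dsum' t n ht).symm)
    apply hcore
    -- translate the fiber identities into the ncount statement
    have hstep : ∀ a ≤ t / 2, ∀ j : Fin (t * n),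
        ((betaSet (t * n) lam j + 1) % t = a ∨
          (betaSet (t * n) lam j + 1) % t = (t - a) % t)
        ↔ (if a = 0 then betaSet (t * n) lam j % t = t - 1
            else (betaSet (t * n) lam j % t = a - 1 ∨
                  betaSet (t * n) lam j % t = t - a - 1)) := by
      intro a ha j
      have hc : betaSet (t * n) lam j % t < t := Nat.mod_lt _ htpos
      have hmm : (betaSet (t * n) lam j + 1) % t
          = (betaSet (t * n) lam j % t + 1) % t := (Nat.mod_add_mod _ _ _).symm
      rw [hmm]
      exact step_iff' t _ a ht hc ha
    constructor
    · have h0 := heq 0 (Finset.mem_range.mpr (by omega))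
      rw [if_pos (Or.inl rfl)] at h0
      have hfe0 : (Finset.univ.filter fun j : Fin (t * n) =>
          (betaSet (t * n) lam j + 1) % t = 0 ∨
          (betaSet (t * n) lam j + 1) % t = (t - 0) % t)
          = Finset.univ.filter fun j : Fin (t * n) => betaSet (t * n) lam j % t = t - 1 := by
        refine Finset.filter_congr fun j _ => ?_
        rw [hstep 0 (by omega) j, if_pos rfl]
      rw [ncount]
      rw [hfe0] at h0
      exact h0
    · intro i hi
      have ha : i + 1 ≤ t / 2 := by omega
      have hmem := Finset.mem_range.mpr (by omega : i + 1 < t / 2 + 1)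
      have hia := heq (i + 1) hmem
      by_cases hpar : 2 * (i + 1) = t
      · -- self-paired block
        rw [if_pos (Or.inr hpar)] at hia
        have hfe : (Finset.univ.filter fun j : Fin (t * n) =>
            (betaSet (t * n) lam j + 1) % t = (i + 1) ∨
            (betaSet (t * n) lam j + 1) % t = (t - (i + 1)) % t)
            = Finset.univ.filter fun j : Fin (t * n) => betaSet (t * n) lam j % t = i := by
          refine Finset.filter_congr fun j _ => ?_
          rw [hstep (i + 1) ha j, if_neg (by omega)]
          constructor
          · rintro (h | h) <;> omega
          · intro h; left; omega
        rw [hfe] at hia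
        have hni : ncount t (t * n) lam i = n := hia
        have ht2 : t - 2 - i = i := by omega
        rw [ht2, hni]
        omega
      · rw [if_neg (by omega)] at hia
        have hfe : (Finset.univ.filter fun j : Fin (t * n) =>
            (betaSet (t * n) lam j + 1) % t = (i + 1) ∨
            (betaSet (t * n) lam j + 1) % t = (t - (i + 1)) % t)
            = Finset.univ.filter fun j : Fin (t * n) =>
              betaSet (t * n) lam j % t = i ∨ betaSet (t * n) lam j % t = t - 2 - i := by
          refine Finset.filter_congr fun j _ => ?_
          rw [hstep (i + 1) ha j, if_neg (by omega)]
          constructor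
          · rintro (h | h)
            · left; omega
            · right; omega
          · rintro (h | h)
            · left; omega
            · right; omega
        rw [hfe, Finset.filter_or, Finset.card_union_of_disjoint] at hia
        · exact hia
        · rw [Finset.disjoint_left]
          intro j hj1 hj2
          rw [Finset.mem_filter] at hj1 hj2
          omega
  refine ⟨key, ?_⟩
  have hnum : (Matrix.of fun i j : Fin (t * n) =>
      (fun r : Fin (t * n) =>
          ω ^ (((finProdFinEquiv.symm r).1 : ℕ)) * x (finProdFinEquiv.symm r).2) i
        ^ ((betaSet (t * n) lam j : ℤ) + 1)
      - (fun r : Fin (t * n) =>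
          ω ^ (((finProdFinEquiv.symm r).1 : ℕ)) * x (finProdFinEquiv.symm r).2) i
        ^ (-(betaSet (t * n) lam j : ℤ) - 1)) = M := rfl
  unfold spChar
  rw [hnum, key, zero_div]
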